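/- Let n ≥ 1, let f : [0,1] → ℝ be continuously differentiable, and let x ∈ [0,1]. Then the derivative of the polynomial x ↦ K_n(f;x) satisfies |(K_n f)′(x)| ≤ (n/(n+1))·‖f′‖_∞ ≤ ‖f′‖_∞. -/

import Mathlib

open scoped BigOperators
open Set Filter MeasureTheory

/-- Bernstein fundamental function `p_{n,k}` (vanishes for `k > n` since `choose = 0`). -/
noncomputable def bp (n k : ℕ) (x : ℝ) : ℝ :=
  (n.choose k : ℝ) * x ^ k * (1 - x) ^ (n - k)

/-- Bernstein fundamental function with integer index, vanishing for negative `k`. -/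
noncomputable def bpz (n : ℕ) (k : ℤ) (x : ℝ) : ℝ :=
  if 0 ≤ k then bp n k.toNat x else 0

/-- The classical Bernstein operator `B_n`. -/
noncomputable def Bern (n : ℕ) (f : ℝ → ℝ) (x : ℝ) : ℝ :=
  ∑ k ∈ Finset.range (n + 1), bp n k x * f (k / n)

/-- Modified fundamental function `p_{n,k}^{M,1}` with `a(x,n) = a1*x + a0`. -/
noncomputable def bpM1 (a0 a1 : ℝ) (n k : ℕ) (x : ℝ) : ℝ :=
  (a1 * x + a0) * bp (n - 1) k x + (a1 * (1 - x) + a0) * bpz (n - 1) ((k : ℤ) - 1) x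

/-- The modified Bernstein operator `B_n^{M,1}`. -/
noncomputable def BernM1 (a0 a1 : ℝ) (n : ℕ) (f : ℝ → ℝ) (x : ℝ) : ℝ :=
  ∑ k ∈ Finset.range (n + 1), bpM1 a0 a1 n k x * f (k / n)

/-- Second modified fundamental function `p_{n,k}^{M,2}`. -/
noncomputable def bpM2 (n k : ℕ) (x : ℝ) : ℝ :=
  ((n : ℝ) / 2 * x ^ 2 + (-1 - (n : ℝ) / 2) * x + 1) * bp (n - 2) k x
    + (n : ℝ) * x * (1 - x) * bpz (n - 2) ((k : ℤ) - 1) x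
    + ((n : ℝ) / 2 * x ^ 2 + (-(n : ℝ) / 2 + 1) * x) * bpz (n - 2) ((k : ℤ) - 2) x

/-- The second modified Bernstein operator `B_n^{M,2}`. -/
noncomputable def BernM2 (n : ℕ) (f : ℝ → ℝ) (x : ℝ) : ℝ :=
  ∑ k ∈ Finset.range (n + 1), bpM2 n k x * f (k / n)

/-- The Kantorovich operator `K_n`. -/
noncomputable def Kan (n : ℕ) (f : ℝ → ℝ) (x : ℝ) : ℝ :=
  ((n : ℝ) + 1) * ∑ k ∈ Finset.range (n + 1),
    bp n k x * ∫ t in ((k : ℝ) / (n + 1))..(((k : ℝ) + 1) / (n + 1)), f t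

/-- The modified Kantorovich operator `K_n^{M,1}`. -/
noncomputable def KanM1 (a0 a1 : ℝ) (n : ℕ) (f : ℝ → ℝ) (x : ℝ) : ℝ :=
  ((n : ℝ) + 1) * ∑ k ∈ Finset.range (n + 1),
    bpM1 a0 a1 n k x * ∫ t in ((k : ℝ) / (n + 1))..(((k : ℝ) + 1) / (n + 1)), f t

/-- The Durrmeyer operator `D_n`. -/
noncomputable def Dur (n : ℕ) (f : ℝ → ℝ) (x : ℝ) : ℝ :=
  ((n : ℝ) + 1) * ∑ k ∈ Finset.range (n + 1),
    bp n k x * ∫ t in (0:ℝ)..1, bp n k t * f t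

/-- The modified Durrmeyer operator `D_n^{M,1}`. -/
noncomputable def DurM1 (a0 a1 : ℝ) (n : ℕ) (f : ℝ → ℝ) (x : ℝ) : ℝ :=
  ((n : ℝ) + 1) * ∑ k ∈ Finset.range (n + 1),
    bpM1 a0 a1 n k x * ∫ t in (0:ℝ)..1, bp n k t * f t

/-- The genuine Bernstein–Durrmeyer operator `U_n`. -/
noncomputable def Gen (n : ℕ) (f : ℝ → ℝ) (x : ℝ) : ℝ :=
  (1 - x) ^ n * f 0 + x ^ n * f 1 +
    ((n : ℝ) - 1) * ∑ k ∈ Finset.Icc 1 (n - 1),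
      bp n k x * ∫ t in (0:ℝ)..1, bp (n - 2) (k - 1) t * f t

/-- The modified genuine Bernstein–Durrmeyer operator `U_n^{M,1}`. -/
noncomputable def GenM1 (a0 a1 : ℝ) (n : ℕ) (f : ℝ → ℝ) (x : ℝ) : ℝ :=
  (a1 * x + a0) * (1 - x) ^ (n - 1) * f 0 + (a1 * (1 - x) + a0) * x ^ (n - 1) * f 1 +
    ((n : ℝ) - 1) * ∑ k ∈ Finset.Icc 1 (n - 1),
      bpM1 a0 a1 n k x * ∫ t in (0:ℝ)..1, bp (n - 2) (k - 1) t * f t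

/-- First modulus of continuity on `[0,1]`. -/
noncomputable def omega1 (f : ℝ → ℝ) (δ : ℝ) : ℝ :=
  sSup {y | ∃ s t : ℝ, s ∈ Icc (0:ℝ) 1 ∧ t ∈ Icc (0:ℝ) 1 ∧ |s - t| ≤ δ ∧ y = |f s - f t|}

/-- Second modulus of smoothness on `[0,1]`. -/
noncomputable def omega2 (f : ℝ → ℝ) (δ : ℝ) : ℝ :=
  sSup {y | ∃ t h : ℝ, 0 < h ∧ h ≤ δ ∧ t - h ∈ Icc (0:ℝ) 1 ∧ t + h ∈ Icc (0:ℝ) 1 ∧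
    y = |f (t + h) - 2 * f t + f (t - h)|}

/-- Sup norm on `[0,1]`. -/
noncomputable def supNorm (g : ℝ → ℝ) : ℝ :=
  sSup {y | ∃ t ∈ Icc (0:ℝ) 1, y = |g t|}


lemma bp_nonneg (n k : ℕ) {x : ℝ} (hx : x ∈ Icc (0:ℝ) 1) : 0 ≤ bp n k x := by
  obtain ⟨h0, h1⟩ := hx
  have : (0:ℝ) ≤ 1 - x := by linarith
  unfold bp; positivity

lemma bp_sum (m : ℕ) (x : ℝ) : ∑ k ∈ Finset.range (m+1), bp m k x = 1 := by
  have h := add_pow x (1-x) m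
  simp only [add_sub_cancel, one_pow] at h
  rw [h]
  exact Finset.sum_congr rfl fun k _ => by unfold bp; ring

lemma choose_id1 (n k : ℕ) (hn : 1 ≤ n) (hk : 1 ≤ k) :
    (k : ℝ) * (n.choose k : ℝ) = (n : ℝ) * ((n-1).choose (k-1) : ℝ) := by
  obtain ⟨m, rfl⟩ : ∃ m, n = m + 1 := ⟨n - 1, by omega⟩
  obtain ⟨j, rfl⟩ : ∃ j, k = j + 1 := ⟨k - 1, by omega⟩
  have h := Nat.add_one_mul_choose_eq m j
  simp only [Nat.add_sub_cancel]
  rw [← Nat.cast_mul, ← Nat.cast_mul, Nat.mul_comm (j+1), h, Nat.mul_comm]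

lemma choose_id2 (n k : ℕ) (hn : 1 ≤ n) :
    ((n - k : ℕ) : ℝ) * (n.choose k : ℝ) = (n : ℝ) * ((n-1).choose k : ℝ) := by
  rcases Nat.eq_zero_or_pos k with rfl | hk
  · simp
  rcases le_or_gt k n with hkn | hkn
  · obtain ⟨m, rfl⟩ : ∃ m, n = m + 1 := ⟨n - 1, by omega⟩
    obtain ⟨j, rfl⟩ : ∃ j, k = j + 1 := ⟨k - 1, by omega⟩
    have hpascal : ((m+1).choose (j+1) : ℝ) = (m.choose (j+1) : ℝ) + (m.choose j : ℝ) := by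
      rw [Nat.choose_succ_succ']; push_cast; ring
    have h1 := choose_id1 (m+1) (j+1) (by omega) (by omega)
    simp only [Nat.add_sub_cancel] at h1 ⊢
    have hc : ((m + 1 - (j + 1) : ℕ) : ℝ) = ((m:ℝ)+1) - ((j:ℝ)+1) := by
      have : j ≤ m := by omega
      push_cast [Nat.succ_sub_succ, this]; ring
    rw [hc, sub_mul, hpascal]
    push_cast at h1 ⊢
    nlinarith [h1]
  · rw [Nat.choose_eq_zero_of_lt hkn, Nat.choose_eq_zero_of_lt (by omega)]
    simp

lemma bp_hasDerivAt (n : ℕ) (hn : 1 ≤ n) (k : ℕ) (x : ℝ) :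
    HasDerivAt (bp n k) ((n:ℝ) * (bpz (n-1) ((k:ℤ)-1) x - bp (n-1) k x)) x := by
  have h1 : HasDerivAt (fun y : ℝ => y ^ k) ((k:ℝ) * x ^ (k-1)) x := hasDerivAt_pow k x
  have h2 : HasDerivAt (fun y : ℝ => (1 - y) ^ (n-k))
      (((n-k : ℕ):ℝ) * (1-x)^(n-k-1) * (-1)) x :=
    ((hasDerivAt_id x).const_sub 1).pow _
  have h3 := (h1.fun_mul h2).const_mul (n.choose k : ℝ)
  have heq : (n.choose k : ℝ) * ((k:ℝ) * x ^ (k-1) * (1-x)^(n-k)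
        + x ^ k * (((n-k : ℕ):ℝ) * (1-x)^(n-k-1) * (-1)))
      = (n:ℝ) * (bpz (n-1) ((k:ℤ)-1) x - bp (n-1) k x) := by
    rcases Nat.eq_zero_or_pos k with rfl | hk
    · simp only [bpz, bp]
      norm_num
    · have htn : ((k:ℤ) - 1).toNat = k - 1 := by omega
      have h0 : (0:ℤ) ≤ (k:ℤ) - 1 := by omega
      simp only [bpz, if_pos h0, htn, bp]
      have e1 : (n-1) - (k-1) = n - k := by omega
      have e2 : (n-1) - k = n - k - 1 := by omega
      rw [e1, e2, mul_sub]
      rw [show ((n:ℝ)) * ((↑((n - 1).choose (k - 1))) * x ^ (k-1) * (1-x)^(n-k))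
            = ((n:ℝ) * (↑((n - 1).choose (k - 1)))) * (x ^ (k-1) * (1-x)^(n-k)) by ring,
          ← choose_id1 n k hn hk,
          show ((n:ℝ)) * ((↑((n - 1).choose k)) * x ^ k * (1-x)^(n-k-1))
            = ((n:ℝ) * (↑((n - 1).choose k))) * (x ^ k * (1-x)^(n-k-1)) by ring,
          ← choose_id2 n k hn]
      ring
  rw [← heq]
  unfold bp
  convert h3 using 2
  · rfl
  · rfl
  ring

/-- bound on the derivative of `K_n f`. -/
theorem stmt10 (n : ℕ) (hn : 1 ≤ n) (f f' : ℝ → ℝ)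
    (hf : ∀ t ∈ Icc (0:ℝ) 1, HasDerivWithinAt f (f' t) (Icc 0 1) t)
    (hf' : ContinuousOn f' (Icc 0 1)) (x : ℝ) (hx : x ∈ Icc (0:ℝ) 1) :
    |deriv (fun y => Kan n f y) x| ≤ (n : ℝ) / ((n : ℝ) + 1) * supNorm f' ∧
    (n : ℝ) / ((n : ℝ) + 1) * supNorm f' ≤ supNorm f' := by
  have hbdd : BddAbove {y | ∃ t ∈ Icc (0:ℝ) 1, y = |f' t|} := by
    have hset : {y | ∃ t ∈ Icc (0:ℝ) 1, y = |f' t|} = (fun t => |f' t|) '' Icc 0 1 := by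
      ext y; simp [eq_comm]
    rw [hset]
    exact (isCompact_Icc.image_of_continuousOn hf'.abs).bddAbove
  set M := supNorm f' with hMdef
  have hMb : ∀ t ∈ Icc (0:ℝ) 1, |f' t| ≤ M := fun t ht => le_csSup hbdd ⟨t, ht, rfl⟩
  have hM0 : (0:ℝ) ≤ M := le_trans (abs_nonneg _) (hMb 0 (by norm_num))
  have hfc : ContinuousOn f (Icc 0 1) := fun t ht => (hf t ht).continuousWithinAt
  have hNpos : (0:ℝ) < (n:ℝ) + 1 := by positivity
  set a : ℕ → ℝ := fun k => ∫ t in ((k:ℝ)/((n:ℝ)+1))..(((k:ℝ)+1)/((n:ℝ)+1)), f t with ha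
  -- derivative of Kan
  have hKan : HasDerivAt (fun y => Kan n f y)
      (((n:ℝ)+1) * ∑ k ∈ Finset.range (n+1),
        ((n:ℝ) * (bpz (n-1) ((k:ℤ)-1) x - bp (n-1) k x)) * a k) x := by
    have hterm : ∀ k ∈ Finset.range (n+1), HasDerivAt (fun y => bp n k y * a k)
        (((n:ℝ) * (bpz (n-1) ((k:ℤ)-1) x - bp (n-1) k x)) * a k) x :=
      fun k _ => (bp_hasDerivAt n hn k x).mul_const _
    exact (HasDerivAt.fun_sum hterm).const_mul _
  -- rewrite the sum
  have hsum : ∑ k ∈ Finset.range (n+1),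
        ((n:ℝ) * (bpz (n-1) ((k:ℤ)-1) x - bp (n-1) k x)) * a k
      = (n:ℝ) * ∑ j ∈ Finset.range n, bp (n-1) j x * (a (j+1) - a j) := by
    have l1 : ∑ k ∈ Finset.range (n+1), bpz (n-1) ((k:ℤ)-1) x * a k
        = ∑ j ∈ Finset.range n, bp (n-1) j x * a (j+1) := by
      rw [Finset.sum_range_succ']
      have h0 : bpz (n-1) ((0:ℕ):ℤ) x = bpz (n-1) 0 x := by norm_num
      simp only [Nat.cast_zero, zero_sub]
      rw [show bpz (n-1) (-1) x = 0 by simp [bpz], zero_mul, add_zero]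
      refine Finset.sum_congr rfl fun j _ => ?_
      congr 1
      simp only [bpz]
      rw [if_pos (by push_cast; omega)]
      congr 1
      push_cast
      omega
    have l2 : ∑ k ∈ Finset.range (n+1), bp (n-1) k x * a k
        = ∑ j ∈ Finset.range n, bp (n-1) j x * a j := by
      rw [Finset.sum_range_succ]
      rw [show bp (n-1) n x = 0 by
        simp [bp, Nat.choose_eq_zero_of_lt (show n-1 < n by omega)]]
      rw [zero_mul, add_zero]
    calc ∑ k ∈ Finset.range (n+1), ((n:ℝ) * (bpz (n-1) ((k:ℤ)-1) x - bp (n-1) k x)) * a k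
        = (n:ℝ) * (∑ k ∈ Finset.range (n+1), bpz (n-1) ((k:ℤ)-1) x * a k
            - ∑ k ∈ Finset.range (n+1), bp (n-1) k x * a k) := by
          rw [← Finset.sum_sub_distrib, Finset.mul_sum]
          exact Finset.sum_congr rfl fun k _ => by ring
      _ = (n:ℝ) * ∑ j ∈ Finset.range n, bp (n-1) j x * (a (j+1) - a j) := by
          rw [l1, l2, ← Finset.sum_sub_distrib]
          congr 1
          exact Finset.sum_congr rfl fun j _ => by ring
  -- bound on increments
  have hd : ∀ j, j < n → |a (j+1) - a j| ≤ M / ((n:ℝ)+1)^2 := by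
    intro j hj
    have hjn : (j:ℝ) + 2 ≤ (n:ℝ) + 1 := by
      have : (j:ℝ) + 1 ≤ (n:ℝ) := by exact_mod_cast hj
      linarith
    have hj0 : (0:ℝ) ≤ (j:ℝ) := Nat.cast_nonneg j
    have hsub1 : Icc ((j:ℝ)/((n:ℝ)+1)) (((j:ℝ)+1)/((n:ℝ)+1)) ⊆ Icc (0:ℝ) 1 := by
      intro t ht
      constructor
      · have := ht.1
        have : (0:ℝ) ≤ (j:ℝ)/((n:ℝ)+1) := by positivity
        linarith [ht.1]
      · have h2 : ((j:ℝ)+1)/((n:ℝ)+1) ≤ 1 := by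
          rw [div_le_one hNpos]; linarith
        linarith [ht.2]
    have hsub2 : ∀ t ∈ Icc ((j:ℝ)/((n:ℝ)+1)) (((j:ℝ)+1)/((n:ℝ)+1)),
        t + 1/((n:ℝ)+1) ∈ Icc (0:ℝ) 1 := by
      intro t ht
      constructor
      · have := (hsub1 ht).1
        have : (0:ℝ) ≤ 1/((n:ℝ)+1) := by positivity
        linarith [(hsub1 ht).1]
      · have h2 : ((j:ℝ)+1)/((n:ℝ)+1) + 1/((n:ℝ)+1) ≤ 1 := by
          rw [← add_div, div_le_one hNpos]; linarith
        linarith [ht.2]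
    have hle : (j:ℝ)/((n:ℝ)+1) ≤ ((j:ℝ)+1)/((n:ℝ)+1) := by
      gcongr
      linarith
    have hIcc1 : ContinuousOn f (uIcc ((j:ℝ)/((n:ℝ)+1)) (((j:ℝ)+1)/((n:ℝ)+1))) := by
      rw [uIcc_of_le hle]; exact hfc.mono hsub1
    have hint1 : IntervalIntegrable f volume ((j:ℝ)/((n:ℝ)+1)) (((j:ℝ)+1)/((n:ℝ)+1)) :=
      hIcc1.intervalIntegrable
    have hcont2 : ContinuousOn (fun t => f (t + 1/((n:ℝ)+1)))
        (uIcc ((j:ℝ)/((n:ℝ)+1)) (((j:ℝ)+1)/((n:ℝ)+1))) := by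
      rw [uIcc_of_le hle]
      exact hfc.comp ((continuous_id.add continuous_const).continuousOn) hsub2
    have hint2 : IntervalIntegrable (fun t => f (t + 1/((n:ℝ)+1))) volume
        ((j:ℝ)/((n:ℝ)+1)) (((j:ℝ)+1)/((n:ℝ)+1)) := hcont2.intervalIntegrable
    have e1 : a (j+1)
        = ∫ t in ((j:ℝ)/((n:ℝ)+1))..(((j:ℝ)+1)/((n:ℝ)+1)), f (t + 1/((n:ℝ)+1)) := by
      rw [intervalIntegral.integral_comp_add_right]
      simp only [ha]
      congr 1 <;> push_cast <;> ring
    have e2 : a (j+1) - a j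
        = ∫ t in ((j:ℝ)/((n:ℝ)+1))..(((j:ℝ)+1)/((n:ℝ)+1)),
            (f (t + 1/((n:ℝ)+1)) - f t) := by
      rw [intervalIntegral.integral_sub hint2 hint1, ← e1]
    rw [e2]
    have hb : ∀ t ∈ Set.uIoc ((j:ℝ)/((n:ℝ)+1)) (((j:ℝ)+1)/((n:ℝ)+1)),
        ‖f (t + 1/((n:ℝ)+1)) - f t‖ ≤ M * (1/((n:ℝ)+1)) := by
      intro t ht
      rw [Set.uIoc_of_le hle] at ht
      have ht' : t ∈ Icc ((j:ℝ)/((n:ℝ)+1)) (((j:ℝ)+1)/((n:ℝ)+1)) := ⟨le_of_lt ht.1, ht.2⟩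
      have h1 := hsub1 ht'
      have h2 := hsub2 t ht'
      have key := (convex_Icc (0:ℝ) 1).norm_image_sub_le_of_norm_hasDerivWithin_le hf
        (fun s hs => by simpa using hMb s hs) h1 h2
      calc ‖f (t + 1/((n:ℝ)+1)) - f t‖ ≤ M * ‖t + 1/((n:ℝ)+1) - t‖ := key
        _ = M * (1/((n:ℝ)+1)) := by
            rw [add_sub_cancel_left, Real.norm_eq_abs, abs_of_pos (by positivity)]
    have hfin := intervalIntegral.norm_integral_le_of_norm_le_const hb
    rw [Real.norm_eq_abs] at hfin
    have heq : |((j:ℝ)+1)/((n:ℝ)+1) - (j:ℝ)/((n:ℝ)+1)| = 1/((n:ℝ)+1) := by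
      rw [div_sub_div_same, add_sub_cancel_left, abs_of_pos (by positivity)]
    rw [heq] at hfin
    calc |∫ t in ((j:ℝ)/((n:ℝ)+1))..(((j:ℝ)+1)/((n:ℝ)+1)),
            (f (t + 1/((n:ℝ)+1)) - f t)|
        ≤ M * (1/((n:ℝ)+1)) * (1/((n:ℝ)+1)) := hfin
      _ = M / ((n:ℝ)+1)^2 := by rw [mul_one_div, mul_one_div, div_div, sq]
  refine ⟨?_, ?_⟩
  · rw [hKan.deriv, hsum]
    have hS : |∑ j ∈ Finset.range n, bp (n-1) j x * (a (j+1) - a j)| ≤ M / ((n:ℝ)+1)^2 := by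
      calc |∑ j ∈ Finset.range n, bp (n-1) j x * (a (j+1) - a j)|
          ≤ ∑ j ∈ Finset.range n, |bp (n-1) j x * (a (j+1) - a j)| :=
            Finset.abs_sum_le_sum_abs _ _
        _ ≤ ∑ j ∈ Finset.range n, bp (n-1) j x * (M / ((n:ℝ)+1)^2) := by
            refine Finset.sum_le_sum fun j hj => ?_
            rw [abs_mul, abs_of_nonneg (bp_nonneg _ _ hx)]
            exact mul_le_mul_of_nonneg_left (hd j (Finset.mem_range.mp hj)) (bp_nonneg _ _ hx)
        _ = M / ((n:ℝ)+1)^2 := by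
            rw [← Finset.sum_mul,
              show Finset.range n = Finset.range ((n-1)+1) by congr 1; omega,
              bp_sum, one_mul]
    rw [abs_mul, abs_mul, abs_of_pos hNpos, abs_of_nonneg (Nat.cast_nonneg n : (0:ℝ) ≤ (n:ℝ))]
    calc ((n:ℝ)+1) * ((n:ℝ) * |∑ j ∈ Finset.range n, bp (n-1) j x * (a (j+1) - a j)|)
        ≤ ((n:ℝ)+1) * ((n:ℝ) * (M / ((n:ℝ)+1)^2)) := by gcongr
      _ = (n:ℝ)/((n:ℝ)+1) * M := by field_simp
  · have h1 : (n:ℝ)/((n:ℝ)+1) ≤ 1 := by rw [div_le_one hNpos]; linarith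
    nlinarith
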